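/- The Balsara MHD vortex satisfies the steady MHD energy equation: with the fields below, total pressure p_t = p + (B₁² + B₂²)/(8π), and total energy density ρE = p/(γ−1) + ρ(u²+v²)/2 + (B₁²+B₂²)/(8π) for a fixed γ > 1, at every point (x,y) ∈ ℝ² one has ∂_x(u(ρE + p_t) − B₁(uB₁ + vB₂)/(4π)) + ∂_y(v(ρE + p_t) − B₂(uB₁ + vB₂)/(4π)) = 0. -/

import Mathlib

set_option maxHeartbeats 1600000


open Real

/-- Squared distance from the vortex center `(5,5)`. -/
noncomputable def mhdR2 (x y : ℝ) : ℝ := (x - 5)^2 + (y - 5)^2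

/-- `x`-velocity of the Balsara MHD vortex. -/
noncomputable def mhdU (κ q x y : ℝ) : ℝ :=
  -(κ / (2 * π)) * exp (q * (1 - mhdR2 x y)) * (y - 5)

/-- `y`-velocity of the Balsara MHD vortex. -/
noncomputable def mhdV (κ q x y : ℝ) : ℝ :=
  (κ / (2 * π)) * exp (q * (1 - mhdR2 x y)) * (x - 5)

/-- `x`-component of the magnetic field of the Balsara MHD vortex. -/
noncomputable def mhdB1 (μ q x y : ℝ) : ℝ :=
  -(μ / (2 * π)) * exp (q * (1 - mhdR2 x y)) * (y - 5)

/-- `y`-component of the magnetic field of the Balsara MHD vortex. -/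
noncomputable def mhdB2 (μ q x y : ℝ) : ℝ :=
  (μ / (2 * π)) * exp (q * (1 - mhdR2 x y)) * (x - 5)

/-- Hydrodynamic pressure of the Balsara MHD vortex. -/
noncomputable def mhdP (κ μ q x y : ℝ) : ℝ :=
  1 + (1 / (64 * q * π^3)) * (μ^2 * (1 - 2 * q * mhdR2 x y) - 4 * π * κ^2)
        * exp (2 * q * (1 - mhdR2 x y))

/-- Total pressure `p_t = p + |B|²/(8π)` of the Balsara MHD vortex. -/
noncomputable def mhdPt (κ μ q x y : ℝ) : ℝ :=
  mhdP κ μ q x y + ((mhdB1 μ q x y)^2 + (mhdB2 μ q x y)^2) / (8 * π)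

/-- Total energy density `ρE = p/(γ−1) + ρ(u²+v²)/2 + |B|²/(8π)` of the
Balsara MHD vortex (with `ρ = 1`). -/
noncomputable def mhdRhoE (γ κ μ q x y : ℝ) : ℝ :=
  mhdP κ μ q x y / (γ - 1)
    + (1 : ℝ) * ((mhdU κ q x y)^2 + (mhdV κ q x y)^2) / 2
    + ((mhdB1 μ q x y)^2 + (mhdB2 μ q x y)^2) / (8 * π)

/-- Radial profile of the energy flux: the `x`-flux equals `(y-5) * mhdH (r²)`
and the `y`-flux equals `-(x-5) * mhdH (r²)`. -/
noncomputable def mhdH (γ κ μ q : ℝ) (w : ℝ) : ℝ :=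
  -(κ / (2 * π)) * exp (q * (1 - w)) *
    (γ / (γ - 1) *
        (1 + (1 / (64 * q * π^3)) * (μ^2 * (1 - 2 * q * w) - 4 * π * κ^2)
          * exp (q * (1 - w)) * exp (q * (1 - w)))
      + (κ / (2 * π))^2 * exp (q * (1 - w)) * exp (q * (1 - w)) * w / 2)

lemma mhdH_differentiable (γ κ μ q : ℝ) : Differentiable ℝ (mhdH γ κ μ q) := by
  unfold mhdH
  fun_prop

lemma mhd_exp2 (q w : ℝ) :
    exp (2 * q * (1 - w)) = exp (q * (1 - w)) * exp (q * (1 - w)) := by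
  rw [← Real.exp_add]; ring_nf

lemma mhd_flux_x (γ κ μ q : ℝ) (hq : q ≠ 0) (hγ : 1 < γ) (x' y : ℝ) :
    mhdU κ q x' y * (mhdRhoE γ κ μ q x' y + mhdPt κ μ q x' y)
        - mhdB1 μ q x' y * (mhdU κ q x' y * mhdB1 μ q x' y
            + mhdV κ q x' y * mhdB2 μ q x' y) / (4 * π)
      = (y - 5) * mhdH γ κ μ q (mhdR2 x' y) := by
  have hπ : (π : ℝ) ≠ 0 := Real.pi_ne_zero
  have hγ' : γ - 1 ≠ 0 := by linarith
  simp only [mhdRhoE, mhdPt, mhdP, mhdU, mhdV, mhdB1, mhdB2, mhdH, mhd_exp2, mhdR2]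
  field_simp
  ring

lemma mhd_flux_y (γ κ μ q : ℝ) (hq : q ≠ 0) (hγ : 1 < γ) (x y' : ℝ) :
    mhdV κ q x y' * (mhdRhoE γ κ μ q x y' + mhdPt κ μ q x y')
        - mhdB2 μ q x y' * (mhdU κ q x y' * mhdB1 μ q x y'
            + mhdV κ q x y' * mhdB2 μ q x y') / (4 * π)
      = -(x - 5) * mhdH γ κ μ q (mhdR2 x y') := by
  have hπ : (π : ℝ) ≠ 0 := Real.pi_ne_zero
  have hγ' : γ - 1 ≠ 0 := by linarith
  simp only [mhdRhoE, mhdPt, mhdP, mhdU, mhdV, mhdB1, mhdB2, mhdH, mhd_exp2, mhdR2]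
  field_simp
  ring

/-- The Balsara MHD vortex satisfies the steady ideal-MHD energy equation
`∂_x(u(ρE + p_t) − B₁(uB₁ + vB₂)/(4π)) + ∂_y(v(ρE + p_t) − B₂(uB₁ + vB₂)/(4π)) = 0`
at every point. -/
theorem mhd_vortex_energy (γ κ μ q : ℝ) (hq : q ≠ 0) (hγ : 1 < γ) (x y : ℝ) :
    deriv (fun x' => mhdU κ q x' y * (mhdRhoE γ κ μ q x' y + mhdPt κ μ q x' y)
        - mhdB1 μ q x' y * (mhdU κ q x' y * mhdB1 μ q x' y
            + mhdV κ q x' y * mhdB2 μ q x' y) / (4 * π)) x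
      + deriv (fun y' => mhdV κ q x y' * (mhdRhoE γ κ μ q x y' + mhdPt κ μ q x y')
        - mhdB2 μ q x y' * (mhdU κ q x y' * mhdB1 μ q x y'
            + mhdV κ q x y' * mhdB2 μ q x y') / (4 * π)) y = 0 := by
  set h := mhdH γ κ μ q with hh
  set w0 := mhdR2 x y with hw0
  have hRx : HasDerivAt (fun x' => mhdR2 x' y) (2 * (x - 5)) x := by
    have h1 := ((((hasDerivAt_id x).sub_const 5).pow 2).add_const ((y - 5)^2))
    simpa [mhdR2] using h1
  have hRy : HasDerivAt (fun y' => mhdR2 x y') (2 * (y - 5)) y := by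
    have h1 := (hasDerivAt_const y ((x - 5)^2)).add (((hasDerivAt_id y).sub_const 5).pow 2)
    exact (h1.congr_deriv (by simp)).congr_of_eventuallyEq
      (Filter.Eventually.of_forall fun y' => by simp [mhdR2])
  have hH : HasDerivAt h (deriv h w0) w0 :=
    ((mhdH_differentiable γ κ μ q) w0).hasDerivAt
  have hdx : HasDerivAt (fun x' => (y - 5) * h (mhdR2 x' y))
      ((y - 5) * (deriv h w0 * (2 * (x - 5)))) x :=
    (hH.comp x hRx).const_mul _
  have hdy : HasDerivAt (fun y' => -(x - 5) * h (mhdR2 x y'))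
      (-(x - 5) * (deriv h w0 * (2 * (y - 5)))) y :=
    (hH.comp y hRy).const_mul _
  have e1 : deriv (fun x' => mhdU κ q x' y * (mhdRhoE γ κ μ q x' y + mhdPt κ μ q x' y)
        - mhdB1 μ q x' y * (mhdU κ q x' y * mhdB1 μ q x' y
            + mhdV κ q x' y * mhdB2 μ q x' y) / (4 * π)) x
      = (y - 5) * (deriv h w0 * (2 * (x - 5))) := by
    rw [funext fun x' => mhd_flux_x γ κ μ q hq hγ x' y]
    exact hdx.deriv
  have e2 : deriv (fun y' => mhdV κ q x y' * (mhdRhoE γ κ μ q x y' + mhdPt κ μ q x y')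
        - mhdB2 μ q x y' * (mhdU κ q x y' * mhdB1 μ q x y'
            + mhdV κ q x y' * mhdB2 μ q x y') / (4 * π)) y
      = -(x - 5) * (deriv h w0 * (2 * (y - 5))) := by
    rw [funext fun y' => mhd_flux_y γ κ μ q hq hγ x y']
    exact hdy.deriv
  rw [e1, e2]; ring
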